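/- Let b = Π_{j=1}^N b_{a_j} be a finite Blaschke product and J₀(z) = z·b′(z)/(N·b(z)) for z ∈ 𝕋. There exist θ₀ ∈ ℝ with e^{iθ₀} = b(1) and a strictly increasing continuous function θ : [0, 2π] → [θ₀, θ₀ + 2πN] with θ(0) = θ₀ and θ(2π) = θ₀ + 2πN, such that b(e^{it}) = e^{iθ(t)} for all t ∈ [0, 2π], and θ is differentiable on (0, 2π) with θ′(t) = N·J₀(e^{it}) > 0 for all t ∈ (0, 2π). In particular θ is a homeomorphism of [0, 2π] onto [θ₀, θ₀ + 2πN]. -/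

import Mathlib

open MeasureTheory Complex ComplexConjugate Topology

set_option maxHeartbeats 1000000
set_option synthInstance.maxHeartbeats 1000000

noncomputable section

namespace CompEnd

instance : MeasurableSpace Circle := borel Circle
instance : BorelSpace Circle := ⟨rfl⟩

/-- normalized Haar (Lebesgue) measure `m` on the unit circle `𝕋` -/
def m : Measure Circle := Measure.haarMeasure ⊤

instance : IsFiniteMeasure m := by unfold m; infer_instance

/-- `L²(𝕋)` -/
abbrev L2 := Lp ℂ 2 m
/-- `L∞(𝕋)` -/
abbrev Linf := Lp ℂ ⊤ m

/-- the continuous function `z ↦ zⁿ` on the circle -/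
def χ (n : ℤ) : C(Circle, ℂ) :=
  ⟨fun z => ((z ^ n : Circle) : ℂ), continuous_subtype_val.comp (continuous_zpow n)⟩

/-- the exponential basis vector `eₙ(z) = zⁿ` of `L²(𝕋)` -/
def e (n : ℤ) : L2 := ContinuousMap.toLp 2 m ℂ (χ n)

open Classical in
/-- the element of `L²(𝕋)` determined by a square-integrable function (junk value `0`
otherwise) -/
def toL2 (φ : Circle → ℂ) : L2 := if h : MemLp φ 2 m then h.toLp φ else 0

open Classical in
/-- the element of `L∞(𝕋)` determined by an essentially bounded function (junk value `0`
otherwise) -/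
def toLinf (φ : Circle → ℂ) : Linf := if h : MemLp φ ⊤ m then h.toLp φ else 0

/-- the Hardy space `H²(𝕋)`: the closed linear span of `{eₙ : n ≥ 0}` in `L²(𝕋)` -/
def H2 : Submodule ℂ L2 := (Submodule.span ℂ (Set.range fun n : ℕ => e n)).topologicalClosure

lemma H2_isClosed : IsClosed (H2 : Set L2) := Submodule.isClosed_topologicalClosure _

instance : CompleteSpace H2 := H2_isClosed.completeSpace_coe

lemma e_mem_H2 (n : ℕ) : e n ∈ H2 :=
  Submodule.le_topologicalClosure _ (Submodule.subset_span ⟨n, rfl⟩)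

/-- multiplication operator on `L²(𝕋)` by an essentially bounded function -/
def mulCLM (φ : Circle → ℂ) (hφ : MemLp φ ⊤ m) : L2 →L[ℂ] L2 :=
  LinearMap.mkContinuous
    { toFun := fun f => ((Lp.memLp f).smul (r := 2) hφ).toLp (φ • ⇑f)
      map_add' := by
        intro f g
        rw [← MemLp.toLp_add]
        apply MemLp.toLp_congr
        filter_upwards [Lp.coeFn_add f g] with x hx
        simp only [Pi.add_apply] at hx
        simp only [Pi.smul_apply, smul_eq_mul, Pi.mul_apply, Pi.add_apply, hx]
        ring
      map_smul' := by
        intro c f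
        simp only [RingHom.id_apply]
        rw [← MemLp.toLp_const_smul c ((Lp.memLp f).smul (r := 2) hφ)]
        apply MemLp.toLp_congr
        filter_upwards [Lp.coeFn_smul c f] with x hx
        simp only [Pi.smul_apply, smul_eq_mul, Pi.mul_apply] at hx ⊢
        rw [hx]
        ring }
    (eLpNorm φ ⊤ m).toReal
    (by
      intro f
      simp only [LinearMap.coe_mk, AddHom.coe_mk]
      rw [Lp.norm_toLp, Lp.norm_def]
      rw [← ENNReal.toReal_mul]
      apply ENNReal.toReal_mono
      · exact ENNReal.mul_ne_top hφ.2.ne (Lp.eLpNorm_ne_top f)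
      · exact eLpNorm_smul_le_eLpNorm_top_mul_eLpNorm 2 (Lp.aestronglyMeasurable f) φ)

open Classical in
/-- the multiplication operator `π(φ)` on `L²(𝕋)` (junk value `0` if `φ` is not
essentially bounded) -/
def mul (φ : Circle → ℂ) : L2 →L[ℂ] L2 :=
  if h : MemLp φ ⊤ m then mulCLM φ h else 0

/-- the multiplication operator `π(φ)` for `φ ∈ L∞(𝕋)` -/
def mulL (φ : Linf) : L2 →L[ℂ] L2 := mulCLM ⇑φ (Lp.memLp φ)

/-- the Toeplitz operator `τ(φ)` on `H²(𝕋)`, i.e. the compression `P π(φ) P` of `π(φ)`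
to the Hardy space -/
def toep (φ : Circle → ℂ) : H2 →L[ℂ] H2 :=
  H2.orthogonalProjectionOnto.comp ((mul φ).comp (Submodule.subtypeL H2))

/-- the Toeplitz operator `τ(φ)` for `φ ∈ L∞(𝕋)` -/
def toepL (φ : Linf) : H2 →L[ℂ] H2 :=
  H2.orthogonalProjectionOnto.comp ((mulL φ).comp (Submodule.subtypeL H2))

/-- the `n`-th Fourier coefficient `f̂(n) = ∫ f(z) z̄ⁿ dm(z)` -/
def coeff (f : Circle → ℂ) (n : ℤ) : ℂ := ∫ z, f z * conj (χ n z) ∂m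

/-- a boundary inner function: `b ∈ L∞(𝕋)` with `|b| = 1` a.e. and `b̂(n) = 0` for `n < 0` -/
def IsBdryInner (b : Circle → ℂ) : Prop :=
  Measurable b ∧ (∀ᵐ z ∂m, ‖b z‖ = 1) ∧ ∀ n : ℤ, n < 0 → coeff b n = 0

/-- pointwise integer powers of a unimodular function, with `b⁻ᵏ = conj(b)ᵏ` for `k > 0` -/
def zpowFun (b : Circle → ℂ) (n : ℤ) : Circle → ℂ := fun z =>
  if 0 ≤ n then b z ^ n.toNat else conj (b z) ^ (-n).toNat

/-- the space `𝒟 = H²(𝕋) ⊖ π(b)H²(𝕋)` -/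
def D (b : Circle → ℂ) : Submodule ℂ L2 := H2 ⊓ (Submodule.map (mul b : L2 →ₗ[ℂ] L2) H2)ᗮ

open Classical in
/-- a Cuntz family of isometries on a Hilbert space:  `Sᵢ* Sⱼ = δᵢⱼ I` and
`Σᵢ Sᵢ Sᵢ* = I` in the strong operator topology -/
def IsCuntzFamily {H : Type*} [NormedAddCommGroup H] [InnerProductSpace ℂ H]
    [CompleteSpace H] {I : Type*} (S : I → H →L[ℂ] H) : Prop :=
  (∀ i j : I, (ContinuousLinearMap.adjoint (S i)).comp (S j) =
      if i = j then ContinuousLinearMap.id ℂ H else 0) ∧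
  ∀ f : H, HasSum (fun i => S i (ContinuousLinearMap.adjoint (S i) f)) f

/-- the weak-* topology `σ(L∞(𝕋), L¹(𝕋))` on `L∞(𝕋)` -/
def wstar : TopologicalSpace Linf :=
  TopologicalSpace.induced (fun φ : Linf => fun g : Lp ℂ 1 m => ∫ z, φ z * g z ∂m)
    Pi.topologicalSpace

/-- pointwise product in `L∞(𝕋)` -/
def sMul (x y : Linf) : Linf := toLinf fun z => x z * y z
/-- the involution (pointwise complex conjugation) on `L∞(𝕋)` -/
def sStar (x : Linf) : Linf := toLinf fun z => conj (x z)
/-- the unit of `L∞(𝕋)` -/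
def sOne : Linf := toLinf fun _ => 1

/-- a unital *-endomorphism of `L∞(𝕋)` -/
def IsStarEndo (β : Linf → Linf) : Prop :=
  (∀ x y, β (x + y) = β x + β y) ∧ (∀ (c : ℂ) (x), β (c • x) = c • β x) ∧
  (∀ x y, β (sMul x y) = sMul (β x) (β y)) ∧ (∀ x, β (sStar x) = sStar (β x)) ∧
  β sOne = sOne

/-- the basis functions `eₙ` as elements of `L∞(𝕋)` -/
def eInf (n : ℤ) : Linf := toLinf (χ n)

/-- `β` is the endomorphism of `L∞(𝕋)` of composition with `b`: the (unique) weak-*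
continuous unital *-endomorphism satisfying `β(eₙ) = bⁿ` for all `n ∈ ℤ` -/
def IsBeta (b : Circle → ℂ) (β : Linf → Linf) : Prop :=
  IsStarEndo β ∧ Continuous[wstar, wstar] β ∧ ∀ n : ℤ, β (eInf n) = toLinf (zpowFun b n)

/-- the Blaschke factor `b_a` with zero `a` -/
def blaschkeFactor (a : ℂ) : ℂ → ℂ := fun z =>
  if a = 0 then z else (((‖a‖ : ℝ) : ℂ) / a) * ((a - z) / (1 - conj a * z))

/-- the finite Blaschke product with zeros `a 0, …, a (N-1)` (with multiplicity) -/
def finBlaschke {N : ℕ} (a : Fin N → ℂ) : ℂ → ℂ := fun z => ∏ j, blaschkeFactor (a j) z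

/-- restriction of a function on `ℂ` to the unit circle -/
def res (f : ℂ → ℂ) : Circle → ℂ := fun z => f (z : ℂ)

/-- the function `J₀(z) = z b′(z) / (N b(z))` -/
def J0 {N : ℕ} (a : Fin N → ℂ) : ℂ → ℂ := fun z =>
  z * deriv (finBlaschke a) z / (N * finBlaschke a z)

open Classical in
/-- a complex number of modulus one, regarded as an element of the circle (junk value `1`
otherwise) -/
def toCircle (w : ℂ) : Circle :=
  if h : ‖w‖ = 1 then (⟨w, by simpa [Submonoid.unitSphere] using h⟩ : Circle) else 1

/-- a finite Blaschke product as a self-map of the circle -/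
def bCircle {N : ℕ} (a : Fin N → ℂ) : Circle → Circle := fun z => toCircle (finBlaschke a z)

/-- `Γ` is the operator of composition with the finite Blaschke product determined by `a`:
the (unique) bounded operator on `L²(𝕋)` with `Γ(eₙ) = bⁿ` for all `n ∈ ℤ` -/
def IsGamma {N : ℕ} (a : Fin N → ℂ) (Γ : L2 →L[ℂ] L2) : Prop :=
  ∀ n : ℤ, Γ (e n) = toL2 (zpowFun (res (finBlaschke a)) n)

/-- `ψ` is (a representative of) the canonical transfer operator `𝓛` applied to `φ`:
`∫ ψ χ dm = ∫ J₀ φ (χ∘b) dm` for every continuous `χ` -/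
def IsTransfer {N : ℕ} (a : Fin N → ℂ) (φ ψ : Circle → ℂ) : Prop :=
  ∀ g : C(Circle, ℂ), ∫ z, ψ z * g z ∂m = ∫ z, J0 a (z : ℂ) * φ z * g (bCircle a z) ∂m

open Classical in
/-- restriction of an operator on `L²(𝕋)` to `H²(𝕋)` (junk value `0` if `H²(𝕋)` is not
invariant) -/
def rest (S : L2 →L[ℂ] L2) : H2 →L[ℂ] H2 :=
  if h : ∀ f : L2, f ∈ H2 → S f ∈ H2 then
    ⟨{ toFun := fun f => ⟨S f.1, h f.1 f.2⟩
       map_add' := fun f g => Subtype.ext (by simp)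
       map_smul' := fun c f => Subtype.ext (by simp) },
     (S.continuous.comp continuous_subtype_val).subtype_mk _⟩
  else 0



def bfD (a z : ℂ) : ℂ :=
  if a = 0 then 1 else (((‖a‖ : ℝ) : ℂ) / a) * ((a * conj a - 1) / (1 - conj a * z) ^ 2)

/-- the Poisson kernel value -/
def P (a z : ℂ) : ℝ := (1 - ‖a‖ ^ 2) / Complex.normSq (1 - conj a * z)

lemma denom_ne {a z : ℂ} (ha : ‖a‖ < 1) (hz : ‖z‖ = 1) :
    1 - conj a * z ≠ 0 := by
  intro h
  have h1 : (1 : ℂ) = conj a * z := by linear_combination h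
  have h2 := congrArg (‖·‖) h1
  simp [norm_mul, hz] at h2
  exact absurd h2.symm (ne_of_lt ha)

lemma mul_conj_one {z : ℂ} (hz : ‖z‖ = 1) : z * conj z = 1 := by
  rw [Complex.mul_conj, Complex.normSq_eq_norm_sq, hz]; norm_num

lemma hasDerivAt_bf {a z : ℂ} (hden : 1 - conj a * z ≠ 0) :
    HasDerivAt (blaschkeFactor a) (bfD a z) z := by
  rcases eq_or_ne a 0 with rfl | h
  · have : blaschkeFactor 0 = fun z : ℂ => z := by funext w; simp [blaschkeFactor]
    rw [this, bfD, if_pos rfl]; exact hasDerivAt_id' z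
  · have h1 : HasDerivAt (fun z : ℂ => a - z) (-1) z := by
      simpa using (hasDerivAt_id z).const_sub a
    have h2 : HasDerivAt (fun z : ℂ => 1 - conj a * z) (-(conj a)) z := by
      simpa using ((hasDerivAt_id z).const_mul (conj a)).const_sub 1
    have hq := (h1.div h2 hden).const_mul ((‖a‖ : ℂ) / a)
    have : blaschkeFactor a = fun z => (‖a‖ : ℂ) / a * ((a - z) / (1 - conj a * z)) := by
      funext w; simp [blaschkeFactor, h]
    rw [this, bfD, if_neg h]
    refine hq.congr_deriv ?_
    ring

lemma key_conj {a z : ℂ} (hz : ‖z‖ = 1) :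
    a - z = -(z * conj (1 - conj a * z)) := by
  have h := mul_conj_one hz
  simp only [map_sub, map_mul, Complex.conj_conj, map_one]
  linear_combination -a * h

lemma abs_bf {a z : ℂ} (ha : ‖a‖ < 1) (hz : ‖z‖ = 1) :
    ‖blaschkeFactor a z‖ = 1 := by
  rcases eq_or_ne a 0 with rfl | h
  · simpa [blaschkeFactor] using hz
  · have hd := denom_ne ha hz
    have hk := key_conj (a := a) hz
    have habs : ‖a - z‖ = ‖1 - conj a * z‖ := by
      rw [hk, norm_neg, norm_mul, hz, one_mul, Complex.norm_conj]
    have ha0 : ‖a‖ ≠ 0 := by simpa using h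
    have hd0 : ‖1 - conj a * z‖ ≠ 0 := by
      simpa using (norm_ne_zero_iff.mpr hd)
    simp only [blaschkeFactor, if_neg h, norm_mul, norm_div, Complex.norm_real, norm_norm]
    rw [habs]
    field_simp

lemma bf_ne {a z : ℂ} (ha : ‖a‖ < 1) (hz : ‖z‖ = 1) :
    blaschkeFactor a z ≠ 0 := by
  intro h0
  have := abs_bf ha hz
  rw [h0] at this; simp at this

lemma P_pos {a z : ℂ} (ha : ‖a‖ < 1) (hz : ‖z‖ = 1) : 0 < P a z := by
  apply div_pos
  · nlinarith [norm_nonneg a]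
  · exact Complex.normSq_pos.2 (denom_ne ha hz)

lemma normSq_cast (w : ℂ) : ((Complex.normSq w : ℝ) : ℂ) = w * conj w :=
  (Complex.mul_conj w).symm

lemma abs_sq_cast (a : ℂ) : ((‖a‖ : ℂ)) ^ 2 = a * conj a := by
  rw [Complex.mul_conj, Complex.normSq_eq_norm_sq]; push_cast; ring

lemma z_mul_bfD {a z : ℂ} (ha : ‖a‖ < 1) (hz : ‖z‖ = 1) :
    z * bfD a z = (P a z : ℂ) * blaschkeFactor a z := by
  have hzz := mul_conj_one hz
  rcases eq_or_ne a 0 with rfl | h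
  · simp [bfD, P, blaschkeFactor, Complex.normSq_one]
  · have hd := denom_ne ha hz
    have hcd : (1 : ℂ) - a * conj z ≠ 0 := by
      intro h0
      apply hd
      have := congrArg conj h0
      simpa [map_sub, map_mul, Complex.conj_conj, mul_comm] using this
    have hns : ((Complex.normSq (1 - conj a * z) : ℝ) : ℂ)
        = (1 - conj a * z) * (1 - a * conj z) := by
      rw [normSq_cast]; congr 1
      simp [map_sub, map_mul, Complex.conj_conj]
    have hns0 : ((Complex.normSq (1 - conj a * z) : ℝ) : ℂ) ≠ 0 := by
      rw [hns]; exact mul_ne_zero hd hcd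
    simp only [bfD, if_neg h, blaschkeFactor, if_neg h, P]
    push_cast
    rw [hns]
    have haa := abs_sq_cast a
    field_simp
    rw [haa]; congr 1
    linear_combination (-(‖a‖ : ℂ) * a * (a * conj a - 1)) * hzz

def bD {N : ℕ} (a : Fin N → ℂ) (z : ℂ) : ℂ :=
  ∑ j, (∏ k ∈ Finset.univ.erase j, blaschkeFactor (a k) z) * bfD (a j) z

def HH {N : ℕ} (a : Fin N → ℂ) (z : ℂ) : ℝ := ∑ j, P (a j) z

lemma hasDerivAt_finBlaschke {N : ℕ} (a : Fin N → ℂ) {z : ℂ}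
    (hz : ∀ j, 1 - conj (a j) * z ≠ 0) :
    HasDerivAt (finBlaschke a) (bD a z) z := by
  have := HasDerivAt.finset_prod (u := Finset.univ) (f := fun j w => blaschkeFactor (a j) w)
    (f' := fun j => bfD (a j) z) (x := z) (fun j _ => hasDerivAt_bf (hz j))
  have e : finBlaschke a = ∏ j, fun w => blaschkeFactor (a j) w := by
    funext w; simp [finBlaschke, Finset.prod_apply]
  simp only [smul_eq_mul] at this; rw [e, bD]; exact this

lemma z_mul_bD {N : ℕ} (a : Fin N → ℂ) (ha : ∀ j, ‖a j‖ < 1) {z : ℂ}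
    (hz : ‖z‖ = 1) :
    z * bD a z = ((HH a z : ℝ) : ℂ) * finBlaschke a z := by
  rw [bD, Finset.mul_sum, HH]
  push_cast
  rw [Finset.sum_mul]
  refine Finset.sum_congr rfl fun j _ => ?_
  have h1 := z_mul_bfD (ha j) hz
  calc z * ((∏ k ∈ Finset.univ.erase j, blaschkeFactor (a k) z) * bfD (a j) z)
      = (∏ k ∈ Finset.univ.erase j, blaschkeFactor (a k) z) * (z * bfD (a j) z) := by ring
    _ = (∏ k ∈ Finset.univ.erase j, blaschkeFactor (a k) z) *
        ((P (a j) z : ℂ) * blaschkeFactor (a j) z) := by rw [h1]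
    _ = (P (a j) z : ℂ) * ((∏ k ∈ Finset.univ.erase j, blaschkeFactor (a k) z) *
        blaschkeFactor (a j) z) := by ring
    _ = _ := by rw [Finset.prod_erase_mul _ _ (Finset.mem_univ j)]; rfl

lemma abs_finBlaschke {N : ℕ} (a : Fin N → ℂ) (ha : ∀ j, ‖a j‖ < 1) {z : ℂ}
    (hz : ‖z‖ = 1) : ‖finBlaschke a z‖ = 1 := by
  rw [show finBlaschke a z = ∏ j, blaschkeFactor (a j) z from rfl, norm_prod]
  exact Finset.prod_eq_one fun j _ => abs_bf (ha j) hz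

lemma finBlaschke_ne {N : ℕ} (a : Fin N → ℂ) (ha : ∀ j, ‖a j‖ < 1) {z : ℂ}
    (hz : ‖z‖ = 1) : finBlaschke a z ≠ 0 := by
  intro h0
  have := abs_finBlaschke a ha hz
  rw [h0] at this; simp at this

lemma P_complex {a z : ℂ} (h : a ≠ 0) (ha : ‖a‖ < 1) (hz : ‖z‖ = 1) :
    ((P a z : ℝ) : ℂ) = z * ((z - a)⁻¹ - (z - (conj a)⁻¹)⁻¹) := by
  have hzz := mul_conj_one hz
  have hca : conj a ≠ 0 := by simpa using h
  have hza : z - a ≠ 0 := by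
    intro h0
    have : z = a := by linear_combination h0
    rw [this] at hz; exact absurd hz (ne_of_lt ha)
  have hzw : z - (conj a)⁻¹ ≠ 0 := by
    intro h0
    have : z = (conj a)⁻¹ := by linear_combination h0
    have h2 := congrArg (‖·‖) this
    rw [hz, norm_inv] at h2
    have h3 : ‖conj a‖ = ‖a‖ := Complex.norm_conj a
    rw [h3] at h2
    have ha0 : 0 < ‖a‖ := by
      simpa [norm_pos_iff] using h
    rw [eq_comm, inv_eq_one_div, div_eq_one_iff_eq (ne_of_gt ha0)] at h2
    exact absurd h2.symm (ne_of_lt ha)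
  have hd := denom_ne ha hz
  have hcd : (1 : ℂ) - a * conj z ≠ 0 := by
    intro h0
    apply hd
    have := congrArg conj h0
    simpa [map_sub, map_mul, Complex.conj_conj, mul_comm] using this
  have hns : ((Complex.normSq (1 - conj a * z) : ℝ) : ℂ)
      = (1 - conj a * z) * (1 - a * conj z) := by
    rw [normSq_cast]; congr 1
    simp [map_sub, map_mul, Complex.conj_conj]
  have haa := abs_sq_cast a
  have hd2 : z * conj a - 1 ≠ 0 := by
    intro h0; apply hd; linear_combination -h0 - (mul_comm z (conj a))
  have hd3 : conj a * z - 1 ≠ 0 := by rwa [mul_comm]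
  simp only [P]
  push_cast
  rw [hns]
  field_simp
  linear_combination (-(z - a) * (conj a * z - 1)) * haa +
    (a * (1 - a * conj a) * (conj a * z - 1)) * hzz

open intervalIntegral in
lemma integral_P {a : ℂ} (ha : ‖a‖ < 1) :
    ∫ s in (0:ℝ)..(2*Real.pi), P a (Complex.exp (s * Complex.I)) = 2 * Real.pi := by
  rcases eq_or_ne a 0 with rfl | h
  · have : ∀ s : ℝ, P 0 (Complex.exp (s * Complex.I)) = 1 := by
      intro s; simp [P, Complex.normSq_one]
    rw [intervalIntegral.integral_congr (g := fun _ => (1:ℝ)) (fun s _ => this s)]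
    simp
  · set w : ℂ := (conj a)⁻¹ with hw
    have hca : conj a ≠ 0 := by simpa using h
    have ha0 : 0 < ‖a‖ := by simpa [norm_pos_iff] using h
    have hwabs : 1 < ‖w‖ := by
      rw [hw, norm_inv, Complex.norm_conj]
      rw [lt_inv_comm₀] <;> simp [ha0, ha]
    set g : ℂ → ℂ := fun ζ => (ζ - a)⁻¹ - (ζ - w)⁻¹ with hg
    have habs1 : ∀ s : ℝ, ‖Complex.exp (s * Complex.I)‖ = 1 := fun s =>
      Complex.norm_exp_ofReal_mul_I s
    -- integrability
    have hc1 : ContinuousOn (fun ζ : ℂ => (ζ - a)⁻¹) (Metric.sphere 0 1) := by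
      apply ContinuousOn.inv₀ (by fun_prop)
      intro ζ hζ
      rw [Metric.mem_sphere, Complex.dist_eq, sub_zero] at hζ
      intro h0
      have : ζ = a := by linear_combination h0
      rw [this] at hζ; exact absurd hζ (ne_of_lt ha)
    have hc2 : ContinuousOn (fun ζ : ℂ => (ζ - w)⁻¹) (Metric.sphere 0 1) := by
      apply ContinuousOn.inv₀ (by fun_prop)
      intro ζ hζ
      rw [Metric.mem_sphere, Complex.dist_eq, sub_zero] at hζ
      intro h0
      have : ζ = w := by linear_combination h0
      rw [this] at hζ; rw [hζ] at hwabs; simp at hwabs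
    have hi1 : CircleIntegrable (fun ζ : ℂ => (ζ - a)⁻¹) 0 1 :=
      ContinuousOn.circleIntegrable (by norm_num) hc1
    have hi2 : CircleIntegrable (fun ζ : ℂ => (ζ - w)⁻¹) 0 1 :=
      ContinuousOn.circleIntegrable (by norm_num) hc2
    have hI1 : (∮ ζ in C(0, 1), (ζ - a)⁻¹) = 2 * Real.pi * Complex.I := by
      apply circleIntegral.integral_sub_inv_of_mem_ball
      simpa [Complex.dist_eq] using ha
    have hI2 : (∮ ζ in C(0, 1), (ζ - w)⁻¹) = 0 := by
      apply circleIntegral_eq_zero_of_differentiable_on_off_countable (zero_le_one)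
        Set.countable_empty
      · apply ContinuousOn.inv₀ (by fun_prop)
        intro ζ hζ
        rw [Metric.mem_closedBall, Complex.dist_eq, sub_zero] at hζ
        intro h0
        have : ζ = w := by linear_combination h0
        rw [this] at hζ; exact absurd hζ (not_le.2 hwabs)
      · intro ζ hζ
        rw [Set.diff_empty, Metric.mem_ball, Complex.dist_eq, sub_zero] at hζ
        apply DifferentiableAt.inv (by fun_prop)
        intro h0
        have : ζ = w := by linear_combination h0
        rw [this] at hζ; exact absurd hζ (not_lt.2 hwabs.le)
    have hIg : (∮ ζ in C(0, 1), g ζ) = 2 * Real.pi * Complex.I := by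
      rw [hg, circleIntegral.integral_sub hi1 hi2, hI1, hI2, sub_zero]
    have hcirc : (∮ ζ in C(0, 1), g ζ)
        = Complex.I * ∫ s in (0:ℝ)..(2*Real.pi),
            Complex.exp (s * Complex.I) * g (Complex.exp (s * Complex.I)) := by
      rw [circleIntegral, ← intervalIntegral.integral_const_mul]
      refine intervalIntegral.integral_congr fun s _ => ?_
      simp only [deriv_circleMap, circleMap, Complex.ofReal_one, one_mul, zero_add,
        smul_eq_mul]
      ring
    have hptw : ∀ s : ℝ, ((P a (Complex.exp (s * Complex.I)) : ℝ) : ℂ)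
        = Complex.exp (s * Complex.I) * g (Complex.exp (s * Complex.I)) := fun s =>
      P_complex h ha (habs1 s)
    have hInt : (∫ s in (0:ℝ)..(2*Real.pi),
        Complex.exp (s * Complex.I) * g (Complex.exp (s * Complex.I))) = 2 * Real.pi := by
      have := hIg.symm.trans hcirc
      have h2 : Complex.I * (2 * Real.pi : ℂ) = Complex.I * ∫ s in (0:ℝ)..(2*Real.pi),
          Complex.exp (s * Complex.I) * g (Complex.exp (s * Complex.I)) := by
        rw [← this]; ring
      exact (mul_left_cancel₀ Complex.I_ne_zero h2).symm
    have hre : ((∫ s in (0:ℝ)..(2*Real.pi), P a (Complex.exp (s * Complex.I)) : ℝ) : ℂ)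
        = 2 * Real.pi := by
      rw [← intervalIntegral.integral_ofReal]
      rw [intervalIntegral.integral_congr (fun s _ => hptw s)]
      exact hInt
    have := congrArg Complex.re hre
    simpa using this


/-- For a finite Blaschke product `b` there is a strictly increasing
continuous `θ : [0, 2π] → [θ₀, θ₀ + 2πN]` with `b(e^{it}) = e^{iθ(t)}`,
`θ′(t) = N J₀(e^{it}) > 0` on `(0, 2π)`, and `θ` is a homeomorphism (bijection) of
`[0, 2π]` onto `[θ₀, θ₀ + 2πN]`. -/
theorem statement11 {N : ℕ} (hN : 0 < N) (a : Fin N → ℂ)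
    (ha : ∀ j, ‖a j‖ < 1) :
    ∃ (θ₀ : ℝ) (θ : ℝ → ℝ),
      Complex.exp (θ₀ * Complex.I) = finBlaschke a 1 ∧
      θ 0 = θ₀ ∧ θ (2 * Real.pi) = θ₀ + N * (2 * Real.pi) ∧
      ContinuousOn θ (Set.Icc 0 (2 * Real.pi)) ∧
      StrictMonoOn θ (Set.Icc 0 (2 * Real.pi)) ∧
      (∀ t ∈ Set.Icc 0 (2 * Real.pi),
        finBlaschke a (Complex.exp (t * Complex.I)) = Complex.exp (θ t * Complex.I)) ∧
      (∀ t ∈ Set.Ioo 0 (2 * Real.pi),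
        HasDerivAt θ ((N : ℝ) * (J0 a (Complex.exp (t * Complex.I))).re) t ∧
        0 < (N : ℝ) * (J0 a (Complex.exp (t * Complex.I))).re) ∧
      Set.BijOn θ (Set.Icc 0 (2 * Real.pi))
        (Set.Icc θ₀ (θ₀ + N * (2 * Real.pi))) := by

  have habs1 : ∀ t : ℝ, ‖Complex.exp (t * Complex.I)‖ = 1 := fun t =>
    Complex.norm_exp_ofReal_mul_I t
  have hden : ∀ t : ℝ, ∀ j, 1 - conj (a j) * Complex.exp (t * Complex.I) ≠ 0 := fun t j =>
    denom_ne (ha j) (habs1 t)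
  set θ₀ : ℝ := Complex.arg (finBlaschke a 1) with hθ₀
  have hb1 : ‖finBlaschke a 1‖ = 1 := abs_finBlaschke a ha (by simp)
  have hexpθ₀ : Complex.exp (θ₀ * Complex.I) = finBlaschke a 1 := by
    have := Complex.norm_mul_exp_arg_mul_I (finBlaschke a 1)
    rw [hb1] at this; simpa using this
  set h : ℝ → ℝ := fun s => HH a (Complex.exp (s * Complex.I)) with hh
  have hcont : Continuous h := by
    rw [hh]
    simp only [HH]
    apply continuous_finset_sum
    intro j _
    simp only [P]
    have hce : Continuous fun s : ℝ => Complex.exp (s * Complex.I) :=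
      Complex.continuous_exp.comp (Complex.continuous_ofReal.mul continuous_const)
    apply Continuous.div continuous_const
    · exact Complex.continuous_normSq.comp (continuous_const.sub (continuous_const.mul hce))
    · intro s
      exact (Complex.normSq_pos.2 (hden s j)).ne'
  have hpos : ∀ t : ℝ, 0 < h t := by
    intro t
    rw [hh]
    exact Finset.sum_pos (fun j _ => P_pos (ha j) (habs1 t))
      (Finset.univ_nonempty_iff.2 ⟨⟨0, hN⟩⟩)
  set θ : ℝ → ℝ := fun t => θ₀ + ∫ s in (0:ℝ)..t, h s with hθ
  have hθd : ∀ t : ℝ, HasDerivAt θ (h t) t := fun t =>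
    ((hcont.integral_hasStrictDerivAt 0 t).hasDerivAt).const_add θ₀
  have hθ0 : θ 0 = θ₀ := by simp [hθ]
  -- derivative of t ↦ exp (t I)
  have hE : ∀ t : ℝ, HasDerivAt (fun t : ℝ => Complex.exp (t * Complex.I))
      (Complex.exp (t * Complex.I) * Complex.I) t := by
    intro t
    have h1 : HasDerivAt (fun t : ℝ => ((t : ℝ) : ℂ)) 1 t := (hasDerivAt_id t).ofReal_comp
    simpa using (h1.mul_const Complex.I).cexp
  have hBz : ∀ t : ℝ, HasDerivAt (finBlaschke a) (bD a (Complex.exp (t * Complex.I)))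
      (Complex.exp (t * Complex.I)) := fun t => hasDerivAt_finBlaschke a (hden t)
  have hB : ∀ t : ℝ, HasDerivAt (fun t : ℝ => finBlaschke a (Complex.exp (t * Complex.I)))
      (bD a (Complex.exp (t * Complex.I)) * (Complex.exp (t * Complex.I) * Complex.I)) t :=
    fun t => by have := (hBz t).comp t (hE t); exact this
  have hkey : ∀ t : ℝ, Complex.exp (t * Complex.I) * bD a (Complex.exp (t * Complex.I))
      = ((h t : ℝ) : ℂ) * finBlaschke a (Complex.exp (t * Complex.I)) := fun t =>
    z_mul_bD a ha (habs1 t)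
  have hbne : ∀ t : ℝ, finBlaschke a (Complex.exp (t * Complex.I)) ≠ 0 := fun t =>
    finBlaschke_ne a ha (habs1 t)
  -- F is constant
  set F : ℝ → ℂ := fun t =>
    finBlaschke a (Complex.exp (t * Complex.I)) * Complex.exp (-(θ t : ℂ) * Complex.I) with hF
  have hFd : ∀ t : ℝ, HasDerivAt F 0 t := by
    intro t
    have hθc : HasDerivAt (fun t : ℝ => Complex.exp (-(θ t : ℂ) * Complex.I))
        (Complex.exp (-(θ t : ℂ) * Complex.I) * (-(h t : ℂ) * Complex.I)) t := by
      have h1 : HasDerivAt (fun t : ℝ => ((θ t : ℝ) : ℂ)) ((h t : ℝ) : ℂ) t :=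
        (hθd t).ofReal_comp
      have h2 := ((h1.neg).mul_const Complex.I).cexp
      simpa using h2
    have := (hB t).mul hθc
    have h0 : bD a (Complex.exp (t * Complex.I)) * (Complex.exp (t * Complex.I) * Complex.I) *
          Complex.exp (-(θ t : ℂ) * Complex.I) +
        finBlaschke a (Complex.exp (t * Complex.I)) *
          (Complex.exp (-(θ t : ℂ) * Complex.I) * (-(h t : ℂ) * Complex.I)) = 0 := by
      linear_combination (Complex.I * Complex.exp (-(θ t : ℂ) * Complex.I)) * hkey t
    rw [h0] at this
    exact this
  have hFconst : ∀ t : ℝ, F t = F 0 := by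
    intro t
    exact is_const_of_deriv_eq_zero (fun s => (hFd s).differentiableAt)
      (fun s => (hFd s).deriv) t 0
  have hF0 : F 0 = 1 := by
    rw [hF]
    simp only [hθ0]
    rw [show Complex.exp ((0:ℝ) * Complex.I) = 1 by simp]
    rw [← hexpθ₀, ← Complex.exp_add]
    simp
  have hbθ : ∀ t : ℝ, finBlaschke a (Complex.exp (t * Complex.I))
      = Complex.exp ((θ t : ℂ) * Complex.I) := by
    intro t
    have h1 : F t = 1 := (hFconst t).trans hF0
    rw [hF] at h1
    simp only at h1
    rw [neg_mul, Complex.exp_neg] at h1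
    field_simp at h1
    rw [mul_comm Complex.I] at h1
    exact h1
  -- value at 2π
  have hint : (∫ s in (0:ℝ)..(2*Real.pi), h s) = N * (2 * Real.pi) := by
    rw [hh]
    simp only [HH]
    rw [intervalIntegral.integral_finset_sum]
    · rw [Finset.sum_congr rfl fun j _ => integral_P (ha j)]
      simp [Finset.card_univ, mul_comm]
    · intro j _
      apply Continuous.intervalIntegrable
      simp only [P]
      have hce : Continuous fun s : ℝ => Complex.exp (s * Complex.I) :=
        Complex.continuous_exp.comp (Complex.continuous_ofReal.mul continuous_const)
      apply Continuous.div continuous_const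
      · exact Complex.continuous_normSq.comp (continuous_const.sub (continuous_const.mul hce))
      · intro s
        exact (Complex.normSq_pos.2 (hden s j)).ne'
  have hθ2π : θ (2 * Real.pi) = θ₀ + N * (2 * Real.pi) := by
    rw [hθ]; simp only; rw [hint]
  -- J0 relation
  have hJ : ∀ t : ℝ, (N : ℝ) * (J0 a (Complex.exp (t * Complex.I))).re = h t := by
    intro t
    have hNne : (N : ℂ) ≠ 0 := Nat.cast_ne_zero.2 hN.ne'
    have hd := (hBz t).deriv
    have hJeq : J0 a (Complex.exp (t * Complex.I)) = ((h t / N : ℝ) : ℂ) := by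
      simp only [J0]
      rw [hd]
      rw [show Complex.exp (t * Complex.I) * bD a (Complex.exp (t * Complex.I))
          = ((h t : ℝ) : ℂ) * finBlaschke a (Complex.exp (t * Complex.I)) from hkey t]
      rw [mul_comm (N : ℂ) (finBlaschke a (Complex.exp (t * Complex.I)))]
      rw [← div_div, mul_div_assoc, div_self (hbne t), mul_one]
      push_cast
      ring
    rw [hJeq, Complex.ofReal_re]
    field_simp
  have hmono : StrictMono θ := strictMono_of_deriv_pos fun t => by
    rw [(hθd t).deriv]; exact hpos t
  have hθcont : Continuous θ := by
    apply continuous_iff_continuousAt.2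
    exact fun t => (hθd t).differentiableAt.continuousAt
  refine ⟨θ₀, θ, hexpθ₀, hθ0, hθ2π, hθcont.continuousOn, hmono.strictMonoOn _, ?_, ?_, ?_⟩
  · intro t _
    exact hbθ t
  · intro t _
    refine ⟨?_, ?_⟩
    · rw [hJ t]; exact hθd t
    · rw [hJ t]; exact hpos t
  · refine ⟨?_, ?_, ?_⟩
    · intro t ht
      constructor
      · rw [← hθ0]; exact (hmono.monotone ht.1)
      · rw [← hθ2π]; exact (hmono.monotone ht.2)
    · exact hmono.injective.injOn
    · rw [show θ₀ = θ 0 from hθ0.symm]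
      rw [show θ 0 + N * (2 * Real.pi) = θ (2 * Real.pi) by rw [hθ0, hθ2π]]
      exact intermediate_value_Icc (by positivity) hθcont.continuousOn


end CompEnd
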